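/- arXiv:2503.11021 — 2 statements merged into one kernel-verified Lean document; each statement's English description precedes it below -/
import Mathlib

section
/- Let U and D be compact topological spaces, z fixed, and let Φ : U × D → ℝ be continuous. Suppose min_{u∈U} max_{d∈D} Φ(u,d) = max_{d∈D} min_{u∈U} Φ(u,d) =: H (the Isaacs condition). Then for every t < 0: inf over measurable u : [t,0) → U of sup over measurable d : [t,0) → D of (1/|t|)∫_t^0 Φ(u(τ),d(τ)) dτ equals H, and similarly sup over measurable d of inf over measurable u of the same time-averaged integral equals H. -/
open Set MeasureTheory


lemma aux_piecewise {D : Type*} [MeasurableSpace D] (F : ℝ → D → ℝ)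
    (hF : ∀ d, Measurable fun τ => F τ d) (d₀ : D) :
    ∀ L : List (Set ℝ × D), (∀ p ∈ L, MeasurableSet p.1) →
    ∃ g : ℝ → D, Measurable g ∧ (Measurable fun τ => F τ (g τ)) ∧
      ∀ τ : ℝ, (∃ p ∈ L, τ ∈ p.1) → ∃ p ∈ L, τ ∈ p.1 ∧ g τ = p.2 := by
  classical
  intro L
  induction L with
  | nil =>
    intro _
    exact ⟨fun _ => d₀, measurable_const, hF d₀, fun τ ⟨p, hp, _⟩ => absurd hp List.not_mem_nil⟩
  | cons p L ih =>
    intro hL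
    obtain ⟨g', hg', hFg', hcov'⟩ := ih (fun q hq => hL q (List.mem_cons_of_mem _ hq))
    have hp1 : MeasurableSet p.1 := hL p (List.mem_cons_self)
    refine ⟨p.1.piecewise (fun _ => p.2) g', Measurable.piecewise hp1 measurable_const hg', ?_, ?_⟩
    · have : (fun τ => F τ (p.1.piecewise (fun _ => p.2) g' τ)) =
        p.1.piecewise (fun τ => F τ p.2) (fun τ => F τ (g' τ)) := by
        funext τ
        by_cases hτ : τ ∈ p.1 <;> simp [Set.piecewise, hτ]
      rw [this]
      exact Measurable.piecewise hp1 (hF p.2) hFg'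
    · intro τ ⟨q, hq, hτq⟩
      by_cases hτp : τ ∈ p.1
      · exact ⟨p, List.mem_cons_self, hτp, Set.piecewise_eq_of_mem _ _ _ hτp⟩
      · have hqL : q ∈ L := by
          rcases List.mem_cons.1 hq with h | h
          · exact absurd (h ▸ hτq) hτp
          · exact h
        obtain ⟨r, hr, hτr, hgr⟩ := hcov' τ ⟨q, hqL, hτq⟩
        exact ⟨r, List.mem_cons_of_mem _ hr, hτr,
          (Set.piecewise_eq_of_notMem _ _ _ hτp).trans hgr⟩

lemma aux_cover {U D : Type*} [TopologicalSpace U] [CompactSpace U]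
    [TopologicalSpace D] [MeasurableSpace D] [Nonempty D]
    (Φ : U → D → ℝ) (hΦ : Continuous fun p : U × D => Φ p.1 p.2)
    (c : ℝ) (h : ∀ u₀ : U, ∃ d₀ : D, c < Φ u₀ d₀)
    (u : ℝ → U)
    (hu : ∀ d : D, Measurable fun τ => Φ (u τ) d)
    (hu' : ∀ V : Set U, IsOpen V → MeasurableSet (u ⁻¹' V)) :
    ∃ g : ℝ → D, Measurable g ∧ (Measurable fun τ => Φ (u τ) (g τ)) ∧
      ∀ τ : ℝ, c < Φ (u τ) (g τ) := by
  choose φ hφ using h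
  set W : U → Set U := fun u₀ => {x | c < Φ x (φ u₀)} with hW
  have hWopen : ∀ u₀, IsOpen (W u₀) := by
    intro u₀
    have : Continuous fun x : U => Φ x (φ u₀) :=
      hΦ.comp (continuous_id.prodMk continuous_const)
    exact isOpen_lt continuous_const this
  have hcover : (Set.univ : Set U) ⊆ ⋃ u₀, W u₀ := fun x _ =>
    Set.mem_iUnion.2 ⟨x, hφ x⟩
  obtain ⟨s, hs⟩ := isCompact_univ.elim_finite_subcover W hWopen hcover
  set L : List (Set ℝ × D) := s.toList.map fun i => (u ⁻¹' W i, φ i) with hLdef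
  have hL : ∀ p ∈ L, MeasurableSet p.1 := by
    intro p hp
    obtain ⟨i, _, rfl⟩ := List.mem_map.1 hp
    exact hu' (W i) (hWopen i)
  obtain ⟨g, hg, hFg, hcov⟩ :=
    aux_piecewise (fun τ d => Φ (u τ) d) hu (Classical.arbitrary D) L hL
  refine ⟨g, hg, hFg, fun τ => ?_⟩
  have : u τ ∈ ⋃ i ∈ s, W i := hs (Set.mem_univ (u τ))
  obtain ⟨i, hi, hmem⟩ := Set.mem_iUnion₂.1 this
  obtain ⟨q, hqL, hτq, hgq⟩ := hcov τ ⟨(u ⁻¹' W i, φ i),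
    List.mem_map.2 ⟨i, Finset.mem_toList.2 hi, rfl⟩, hmem⟩
  obtain ⟨j, _, rfl⟩ := List.mem_map.1 hqL
  rw [hgq]
  exact hτq

/-- Under the Isaacs condition `min_u max_d Φ = max_d min_u Φ = H` for a
continuous payoff `Φ` on a product of compact spaces, for every `t < 0` the inf-sup and the
sup-inf (over measurable control/disturbance signals) of the time-averaged payoff
`(1/|t|)∫_t^0 Φ(u(τ),d(τ)) dτ` both equal `H`. -/
theorem stmt8 {U D : Type*}
    [TopologicalSpace U] [CompactSpace U] [Nonempty U] [MeasurableSpace U] [BorelSpace U]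
    [TopologicalSpace D] [CompactSpace D] [Nonempty D] [MeasurableSpace D] [BorelSpace D]
    (Φ : U → D → ℝ) (hΦ : Continuous fun p : U × D => Φ p.1 p.2)
    (H : ℝ)
    (hIsaacs₁ : (⨅ u : U, ⨆ d : D, Φ u d) = H)
    (hIsaacs₂ : (⨆ d : D, ⨅ u : U, Φ u d) = H)
    (t : ℝ) (ht : t < 0) :
    (⨅ u : {f : ℝ → U // Measurable f}, ⨆ d : {f : ℝ → D // Measurable f},
      (1 / |t|) * ∫ τ in t..(0:ℝ), Φ (u.1 τ) (d.1 τ)) = H ∧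
    (⨆ d : {f : ℝ → D // Measurable f}, ⨅ u : {f : ℝ → U // Measurable f},
      (1 / |t|) * ∫ τ in t..(0:ℝ), Φ (u.1 τ) (d.1 τ)) = H := by
  classical
  haveI : Nonempty {f : ℝ → U // Measurable f} :=
    ⟨⟨fun _ => Classical.arbitrary U, measurable_const⟩⟩
  haveI : Nonempty {f : ℝ → D // Measurable f} :=
    ⟨⟨fun _ => Classical.arbitrary D, measurable_const⟩⟩
  have ht0 : t ≤ 0 := ht.le
  have htne : t ≠ 0 := ne_of_lt ht
  have habs : |t| = -t := abs_of_neg ht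
  -- global bounds on Φ
  obtain ⟨pM, -, hpM⟩ := isCompact_univ.exists_isMaxOn
    (Set.univ_nonempty (α := U × D)) hΦ.continuousOn
  set M : ℝ := Φ pM.1 pM.2 with hMdef
  have hMb : ∀ u d, Φ u d ≤ M := fun u d => hpM (Set.mem_univ (u, d))
  obtain ⟨pm, -, hpm⟩ := isCompact_univ.exists_isMinOn
    (Set.univ_nonempty (α := U × D)) hΦ.continuousOn
  set m : ℝ := Φ pm.1 pm.2 with hmdef
  have hmb : ∀ u d, m ≤ Φ u d := fun u d => hpm (Set.mem_univ (u, d))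
  -- integrability
  have hInt : ∀ (u : ℝ → U) (d : ℝ → D), Measurable (fun τ => Φ (u τ) (d τ)) →
      IntervalIntegrable (fun τ => Φ (u τ) (d τ)) volume t 0 := by
    intro u d hf
    rw [intervalIntegrable_iff, Set.uIoc_of_le ht0]
    refine Integrable.mono' (g := fun _ => |m| + |M|)
      ((integrableOn_const_iff).2 (Or.inr measure_Ioc_lt_top)) hf.aestronglyMeasurable ?_
    refine Filter.Eventually.of_forall fun τ => ?_
    rw [Real.norm_eq_abs, abs_le]
    constructor
    · show -(|m| + |M|) ≤ Φ (u τ) (d τ)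
      linarith [neg_abs_le m, abs_nonneg M, hmb (u τ) (d τ)]
    · show Φ (u τ) (d τ) ≤ |m| + |M|
      linarith [le_abs_self M, abs_nonneg m, hMb (u τ) (d τ)]
  -- average bounds given pointwise bounds
  have avg_le : ∀ (u : ℝ → U) (d : ℝ → D) (B : ℝ),
      IntervalIntegrable (fun τ => Φ (u τ) (d τ)) volume t 0 →
      (∀ τ, Φ (u τ) (d τ) ≤ B) →
      (1 / |t|) * ∫ τ in t..(0:ℝ), Φ (u τ) (d τ) ≤ B := by
    intro u d B hI hb
    have h1 : (∫ τ in t..(0:ℝ), Φ (u τ) (d τ)) ≤ ∫ _ in t..(0:ℝ), B :=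
      intervalIntegral.integral_mono_on ht0 hI intervalIntegrable_const (fun x _ => hb x)
    rw [intervalIntegral.integral_const, smul_eq_mul] at h1
    have h2 : (1 / |t|) * ∫ τ in t..(0:ℝ), Φ (u τ) (d τ) ≤ (1 / |t|) * ((0 - t) * B) :=
      mul_le_mul_of_nonneg_left h1 (by positivity)
    have h3 : (1 / |t|) * ((0 - t) * B) = B := by
      rw [habs]; field_simp; ring
    linarith
  have le_avg : ∀ (u : ℝ → U) (d : ℝ → D) (B : ℝ),
      IntervalIntegrable (fun τ => Φ (u τ) (d τ)) volume t 0 →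
      (∀ τ, B ≤ Φ (u τ) (d τ)) →
      B ≤ (1 / |t|) * ∫ τ in t..(0:ℝ), Φ (u τ) (d τ) := by
    intro u d B hI hb
    have h1 : (∫ _ in t..(0:ℝ), B) ≤ ∫ τ in t..(0:ℝ), Φ (u τ) (d τ) :=
      intervalIntegral.integral_mono_on ht0 intervalIntegrable_const hI (fun x _ => hb x)
    rw [intervalIntegral.integral_const, smul_eq_mul] at h1
    have h2 : (1 / |t|) * ((0 - t) * B) ≤ (1 / |t|) * ∫ τ in t..(0:ℝ), Φ (u τ) (d τ) :=
      mul_le_mul_of_nonneg_left h1 (by positivity)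
    have h3 : (1 / |t|) * ((0 - t) * B) = B := by
      rw [habs]; field_simp; ring
    linarith
  -- generic bounds (even without integrability)
  have avg_ub : ∀ (u : ℝ → U) (d : ℝ → D),
      (1 / |t|) * (∫ τ in t..(0:ℝ), Φ (u τ) (d τ)) ≤ max M 0 := by
    intro u d
    by_cases hI : IntervalIntegrable (fun τ => Φ (u τ) (d τ)) volume t 0
    · exact le_trans (avg_le u d M hI fun τ => hMb _ _) (le_max_left _ _)
    · rw [intervalIntegral.integral_undef hI, mul_zero]; exact le_max_right _ _
  have avg_lb : ∀ (u : ℝ → U) (d : ℝ → D),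
      min m 0 ≤ (1 / |t|) * ∫ τ in t..(0:ℝ), Φ (u τ) (d τ) := by
    intro u d
    by_cases hI : IntervalIntegrable (fun τ => Φ (u τ) (d τ)) volume t 0
    · exact le_trans (min_le_left _ _) (le_avg u d m hI fun τ => hmb _ _)
    · rw [intervalIntegral.integral_undef hI, mul_zero]; exact min_le_right _ _
  -- measurability helpers
  have measc₁ : ∀ (u₀ : U) (d : ℝ → D), Measurable d → Measurable fun τ => Φ u₀ (d τ) :=
    fun u₀ d hd => ((hΦ.comp (continuous_const.prodMk continuous_id)).measurable).comp hd
  have measc₂ : ∀ (d₀ : D) (u : ℝ → U), Measurable u → Measurable fun τ => Φ (u τ) d₀ :=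
    fun d₀ u hu => ((hΦ.comp (continuous_id.prodMk continuous_const)).measurable).comp hu
  -- bddness of families of averages
  have bddA_d : ∀ u : ℝ → U, BddAbove (Set.range fun d : {f : ℝ → D // Measurable f} =>
      (1 / |t|) * ∫ τ in t..(0:ℝ), Φ (u τ) (d.1 τ)) := by
    intro u
    exact ⟨max M 0, by rintro x ⟨d, rfl⟩; exact avg_ub u d.1⟩
  have bddA_u : ∀ d : ℝ → D, BddBelow (Set.range fun u : {f : ℝ → U // Measurable f} =>
      (1 / |t|) * ∫ τ in t..(0:ℝ), Φ (u.1 τ) (d τ)) := by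
    intro d
    exact ⟨min m 0, by rintro x ⟨u, rfl⟩; exact avg_lb u.1 d⟩
  -- bddness at the Φ level
  have bddΦd : ∀ u₀ : U, BddAbove (Set.range fun d : D => Φ u₀ d) :=
    fun u₀ => ⟨M, by rintro x ⟨d, rfl⟩; exact hMb _ _⟩
  have bddΦu : ∀ d₀ : D, BddBelow (Set.range fun u : U => Φ u d₀) :=
    fun d₀ => ⟨m, by rintro x ⟨u, rfl⟩; exact hmb _ _⟩
  have hg_ge : ∀ u₀ : U, H ≤ ⨆ d : D, Φ u₀ d := by
    intro u₀
    rw [← hIsaacs₁]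
    refine ciInf_le ⟨m, ?_⟩ u₀
    rintro x ⟨u', rfl⟩
    exact le_trans (hmb u' (Classical.arbitrary D)) (le_ciSup (bddΦd u') (Classical.arbitrary D))
  have hh_le : ∀ d₀ : D, (⨅ u : U, Φ u d₀) ≤ H := by
    intro d₀
    rw [← hIsaacs₂]
    refine le_ciSup (f := fun d : D => ⨅ u : U, Φ u d) ⟨M, ?_⟩ d₀
    rintro x ⟨d', rfl⟩
    exact le_trans (ciInf_le (bddΦu d') (Classical.arbitrary U)) (hMb (Classical.arbitrary U) d')
  have bddIS : BddBelow (Set.range fun u : {f : ℝ → U // Measurable f} =>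
      ⨆ d : {f : ℝ → D // Measurable f},
      (1 / |t|) * ∫ τ in t..(0:ℝ), Φ (u.1 τ) (d.1 τ)) := by
    refine ⟨min m 0, ?_⟩
    rintro x ⟨u, rfl⟩
    exact le_trans (avg_lb u.1 (fun _ => Classical.arbitrary D))
      (le_ciSup (bddA_d u.1) ⟨fun _ => Classical.arbitrary D, measurable_const⟩)
  have bddSI : BddAbove (Set.range fun d : {f : ℝ → D // Measurable f} =>
      ⨅ u : {f : ℝ → U // Measurable f},
      (1 / |t|) * ∫ τ in t..(0:ℝ), Φ (u.1 τ) (d.1 τ)) := by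
    refine ⟨max M 0, ?_⟩
    rintro x ⟨d, rfl⟩
    exact le_trans (ciInf_le (bddA_u d.1) ⟨fun _ => Classical.arbitrary U, measurable_const⟩)
      (avg_ub (fun _ => Classical.arbitrary U) d.1)
  -- Part I : inf-sup ≤ H
  have infsup_le : (⨅ u : {f : ℝ → U // Measurable f}, ⨆ d : {f : ℝ → D // Measurable f},
      (1 / |t|) * ∫ τ in t..(0:ℝ), Φ (u.1 τ) (d.1 τ)) ≤ H := by
    refine le_of_forall_pos_le_add fun ε hε => ?_
    obtain ⟨u₀, hu₀⟩ : ∃ u₀ : U, (⨆ d : D, Φ u₀ d) < H + ε :=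
      exists_lt_of_ciInf_lt (by rw [hIsaacs₁]; linarith)
    have step : (⨆ d : {f : ℝ → D // Measurable f},
        (1 / |t|) * ∫ τ in t..(0:ℝ), Φ u₀ (d.1 τ)) ≤ ⨆ d : D, Φ u₀ d := by
      refine ciSup_le fun d => ?_
      exact avg_le (fun _ => u₀) d.1 _ (hInt _ _ (measc₁ u₀ d.1 d.2))
        (fun τ => le_ciSup (bddΦd u₀) (d.1 τ))
    calc (⨅ u : {f : ℝ → U // Measurable f}, ⨆ d : {f : ℝ → D // Measurable f},
        (1 / |t|) * ∫ τ in t..(0:ℝ), Φ (u.1 τ) (d.1 τ))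
        ≤ ⨆ d : {f : ℝ → D // Measurable f},
          (1 / |t|) * ∫ τ in t..(0:ℝ), Φ u₀ (d.1 τ) :=
          ciInf_le bddIS ⟨fun _ => u₀, measurable_const⟩
      _ ≤ ⨆ d : D, Φ u₀ d := step
      _ ≤ H + ε := hu₀.le
  -- Part II : H ≤ inf-sup
  have le_infsup : H ≤ (⨅ u : {f : ℝ → U // Measurable f}, ⨆ d : {f : ℝ → D // Measurable f},
      (1 / |t|) * ∫ τ in t..(0:ℝ), Φ (u.1 τ) (d.1 τ)) := by
    refine le_ciInf fun u => ?_
    refine le_of_forall_pos_le_add fun ε hε => ?_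
    have hcov : ∀ u₀ : U, ∃ d₀ : D, H - ε < Φ u₀ d₀ := fun u₀ =>
      exists_lt_of_lt_ciSup (lt_of_lt_of_le (by linarith) (hg_ge u₀))
    obtain ⟨g, hg, hfg, hgt⟩ := aux_cover Φ hΦ (H - ε) hcov u.1
      (fun d₀ => measc₂ d₀ u.1 u.2) (fun V hV => u.2 hV.measurableSet)
    have h1 : H - ε ≤ (1 / |t|) * ∫ τ in t..(0:ℝ), Φ (u.1 τ) (g τ) :=
      le_avg u.1 g _ (hInt _ _ hfg) (fun τ => (hgt τ).le)
    have h2 : (1 / |t|) * (∫ τ in t..(0:ℝ), Φ (u.1 τ) (g τ)) ≤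
        ⨆ d : {f : ℝ → D // Measurable f},
        (1 / |t|) * ∫ τ in t..(0:ℝ), Φ (u.1 τ) (d.1 τ) :=
      le_ciSup (bddA_d u.1) ⟨g, hg⟩
    linarith
  -- Part III : H ≤ sup-inf
  have le_supinf : H ≤ (⨆ d : {f : ℝ → D // Measurable f}, ⨅ u : {f : ℝ → U // Measurable f},
      (1 / |t|) * ∫ τ in t..(0:ℝ), Φ (u.1 τ) (d.1 τ)) := by
    refine le_of_forall_pos_le_add fun ε hε => ?_
    obtain ⟨d₀, hd₀⟩ : ∃ d₀ : D, H - ε < ⨅ u : U, Φ u d₀ :=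
      exists_lt_of_lt_ciSup (by rw [hIsaacs₂]; linarith)
    have h1 : ∀ u : {f : ℝ → U // Measurable f},
        H - ε ≤ (1 / |t|) * ∫ τ in t..(0:ℝ), Φ (u.1 τ) d₀ := fun u =>
      le_avg u.1 (fun _ => d₀) _ (hInt _ _ (measc₂ d₀ u.1 u.2))
        (fun τ => le_trans hd₀.le (ciInf_le (bddΦu d₀) (u.1 τ)))
    have h2 : H - ε ≤ ⨅ u : {f : ℝ → U // Measurable f},
        (1 / |t|) * ∫ τ in t..(0:ℝ), Φ (u.1 τ) d₀ := le_ciInf h1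
    have h3 : (⨅ u : {f : ℝ → U // Measurable f},
        (1 / |t|) * ∫ τ in t..(0:ℝ), Φ (u.1 τ) d₀) ≤
        ⨆ d : {f : ℝ → D // Measurable f}, ⨅ u : {f : ℝ → U // Measurable f},
        (1 / |t|) * ∫ τ in t..(0:ℝ), Φ (u.1 τ) (d.1 τ) :=
      le_ciSup bddSI ⟨fun _ => d₀, measurable_const⟩
    linarith
  -- Part IV : sup-inf ≤ H
  have supinf_le : (⨆ d : {f : ℝ → D // Measurable f}, ⨅ u : {f : ℝ → U // Measurable f},
      (1 / |t|) * ∫ τ in t..(0:ℝ), Φ (u.1 τ) (d.1 τ)) ≤ H := by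
    refine ciSup_le fun d => ?_
    refine le_of_forall_pos_le_add fun ε hε => ?_
    have hcov : ∀ d₀ : D, ∃ u₀ : U, -(H + ε) < -Φ u₀ d₀ := by
      intro d₀
      obtain ⟨u₀, h⟩ : ∃ u₀ : U, Φ u₀ d₀ < H + ε :=
        exists_lt_of_ciInf_lt (lt_of_le_of_lt (hh_le d₀) (by linarith))
      exact ⟨u₀, by linarith⟩
    obtain ⟨g, hg, hfg, hgt⟩ := aux_cover (fun d u => -Φ u d)
      ((hΦ.comp (continuous_snd.prodMk continuous_fst)).neg) (-(H + ε)) hcov d.1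
      (fun u₀ => (measc₁ u₀ d.1 d.2).neg) (fun V hV => d.2 hV.measurableSet)
    have hm : Measurable fun τ => Φ (g τ) (d.1 τ) := by
      have := hfg.neg
      simpa [Pi.neg_def] using this
    have h1 : (1 / |t|) * (∫ τ in t..(0:ℝ), Φ (g τ) (d.1 τ)) ≤ H + ε :=
      avg_le g d.1 _ (hInt _ _ hm) (fun τ => by linarith [hgt τ])
    exact le_trans (ciInf_le (bddA_u d.1) ⟨g, hg⟩) h1
  exact ⟨le_antisymm infsup_le le_infsup, le_antisymm supinf_le le_supinf⟩
end

section
/- Let U, D be compact metric spaces and Φ : U × D → ℝ continuous, and suppose min_u max_d Φ = max_d min_u Φ = H. Fix t < 0, a partition t = t₀ < ⋯ < t_r = 0, and let U_j, D_j denote the sets of measurable functions from [t_{j-1},t_j) to U and D respectively. Then the multistage alternating value inf_{u₁∈U₁} sup_{d₁∈D₁} ⋯ inf_{u_r∈U_r} sup_{d_r∈D_r} (1/|t|) ∫_t^0 Φ([u₁,…,u_r)(τ), [d₁,…,d_r)(τ)) dτ equals H, where [·,…,·) denotes concatenation along the partition. -/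
open Set MeasureTheory

/-- The alternating multistage value `inf_{a₁} sup_{b₁} ⋯ inf_{a_r} sup_{b_r} J`, where in
each stage the `α`-player (minimizer) commits first. -/
noncomputable def altVal {α β : Type*} :
    (r : ℕ) → ((Fin r → α) → (Fin r → β) → ℝ) → ℝ
  | 0, J => J Fin.elim0 Fin.elim0
  | r + 1, J =>
    ⨅ a : α, ⨆ b : β, altVal r fun as bs => J (Fin.cons a as) (Fin.cons b bs)

lemma altVal_bounds_aux {α β : Type*} [Nonempty α] [Nonempty β] {lo hi : ℝ} :
    ∀ (r : ℕ) (J : (Fin r → α) → (Fin r → β) → ℝ),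
      (∀ as bs, lo ≤ J as bs ∧ J as bs ≤ hi) → lo ≤ altVal r J ∧ altVal r J ≤ hi := by
  intro r
  induction r with
  | zero => intro J h; exact h _ _
  | succ r ih =>
    intro J h
    have hv : ∀ (a : α) (b : β),
        lo ≤ altVal r (fun as bs => J (Fin.cons a as) (Fin.cons b bs)) ∧
        altVal r (fun as bs => J (Fin.cons a as) (Fin.cons b bs)) ≤ hi := by
      intro a b
      exact ih _ (fun as bs => h _ _)
    have hbA : ∀ a : α, BddAbove (Set.range fun b : β =>
        altVal r (fun as bs => J (Fin.cons a as) (Fin.cons b bs))) := by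
      intro a
      refine ⟨hi, ?_⟩
      rintro x ⟨b, rfl⟩
      exact (hv a b).2
    have hg : ∀ a : α, lo ≤ (⨆ b : β, altVal r fun as bs => J (Fin.cons a as) (Fin.cons b bs)) ∧
        (⨆ b : β, altVal r fun as bs => J (Fin.cons a as) (Fin.cons b bs)) ≤ hi := by
      intro a
      constructor
      · exact le_trans (hv a (Classical.arbitrary β)).1 (le_ciSup (hbA a) _)
      · exact ciSup_le fun b => (hv a b).2
    constructor
    · exact le_ciInf fun a => (hg a).1
    · refine le_trans (ciInf_le ?_ (Classical.arbitrary α)) (hg _).2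
      refine ⟨lo, ?_⟩
      rintro x ⟨a, rfl⟩
      exact (hg a).1

lemma altVal_le_aux {α β : Type*} [Nonempty α] [Nonempty β] {lo hi H : ℝ} (astar : α) :
    ∀ (r : ℕ) (J : (Fin r → α) → (Fin r → β) → ℝ),
      (∀ as bs, lo ≤ J as bs ∧ J as bs ≤ hi) →
      (∀ bs, J (fun _ => astar) bs ≤ H) → altVal r J ≤ H := by
  intro r
  induction r with
  | zero =>
    intro J _ h1
    have : (fun _ : Fin 0 => astar) = Fin.elim0 := funext fun i => i.elim0
    simpa [altVal, this] using h1 Fin.elim0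
  | succ r ih =>
    intro J hb h1
    have hcons : Fin.cons astar (fun _ : Fin r => astar) = fun _ : Fin (r + 1) => astar := by
      funext i
      refine Fin.cases rfl (fun i => rfl) i
    have hbB : BddBelow (Set.range fun a : α =>
        ⨆ b : β, altVal r fun as bs => J (Fin.cons a as) (Fin.cons b bs)) := by
      refine ⟨lo, ?_⟩
      rintro x ⟨a, rfl⟩
      have hv := fun b : β => (altVal_bounds_aux (lo := lo) (hi := hi) r
        (fun as bs => J (Fin.cons a as) (Fin.cons b bs)) (fun as bs => hb _ _))
      refine le_trans (hv (Classical.arbitrary β)).1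
        (le_ciSup (f := fun b : β => altVal r fun as bs => J (Fin.cons a as) (Fin.cons b bs))
          ⟨hi, ?_⟩ _)
      rintro x ⟨b, rfl⟩
      exact (hv b).2
    refine le_trans (ciInf_le hbB astar) (ciSup_le fun b => ?_)
    refine ih _ (fun as bs => hb _ _) (fun bs => ?_)
    have := h1 (Fin.cons b bs)
    rw [← hcons] at this
    exact this

lemma altVal_ge_aux {α β : Type*} [Nonempty α] [Nonempty β] {lo hi H : ℝ} (bstar : β) :
    ∀ (r : ℕ) (J : (Fin r → α) → (Fin r → β) → ℝ),
      (∀ as bs, lo ≤ J as bs ∧ J as bs ≤ hi) →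
      (∀ as, H ≤ J as (fun _ => bstar)) → H ≤ altVal r J := by
  intro r
  induction r with
  | zero =>
    intro J _ h1
    have : (fun _ : Fin 0 => bstar) = Fin.elim0 := funext fun i => i.elim0
    simpa [altVal, this] using h1 Fin.elim0
  | succ r ih =>
    intro J hb h1
    have hcons : Fin.cons bstar (fun _ : Fin r => bstar) = fun _ : Fin (r + 1) => bstar := by
      funext i
      refine Fin.cases rfl (fun i => rfl) i
    refine le_ciInf fun a => ?_
    have hkey : H ≤ altVal r fun as bs => J (Fin.cons a as) (Fin.cons bstar bs) := by
      refine ih _ (fun as bs => hb _ _) (fun as => ?_)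
      have := h1 (Fin.cons a as)
      rw [← hcons] at this
      exact this
    refine le_trans hkey
      (le_ciSup (f := fun b : β => altVal r fun as bs => J (Fin.cons a as) (Fin.cons b bs))
        ⟨hi, ?_⟩ bstar)
    rintro x ⟨b, rfl⟩
    exact (altVal_bounds_aux (lo := lo) (hi := hi) r _ (fun as bs => hb _ _)).2
lemma integral_helper {f : ℝ → ℝ} {lo hi : ℝ}
    (h : ∀ x, lo ≤ f x ∧ f x ≤ hi) {a b : ℝ} (hab : a ≤ b)
    (hok : Measurable f ∨ (lo ≤ 0 ∧ 0 ≤ hi)) :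
    lo * (b - a) ≤ (∫ x in a..b, f x) ∧ (∫ x in a..b, f x) ≤ hi * (b - a) := by
  by_cases hAE : AEStronglyMeasurable f (MeasureTheory.volume.restrict (Set.Ioc a b))
  · have hint : IntervalIntegrable f volume a b := by
      rw [intervalIntegrable_iff, Set.uIoc_of_le hab]
      refine ⟨hAE, ?_⟩
      refine MeasureTheory.HasFiniteIntegral.restrict_of_bounded (C := |lo| + |hi|)
        (by simp [lt_top_iff_ne_top]) (Filter.Eventually.of_forall fun x => ?_)
      have h1 := (h x).1
      have h2 := (h x).2
      rw [Real.norm_eq_abs, abs_le]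
      have := neg_abs_le lo
      have := le_abs_self hi
      have := abs_nonneg lo
      have := abs_nonneg hi
      constructor <;> linarith
    constructor
    · have := intervalIntegral.integral_mono_on hab (intervalIntegrable_const (c := lo)) hint
        (fun x _ => (h x).1)
      simpa [intervalIntegral.integral_const, smul_eq_mul, mul_comm] using this
    · have := intervalIntegral.integral_mono_on hab hint (intervalIntegrable_const (c := hi))
        (fun x _ => (h x).2)
      simpa [intervalIntegral.integral_const, smul_eq_mul, mul_comm] using this
  · rcases hok with hmeas | ⟨hlo0, hhi0⟩
    · exact absurd ((hmeas.aestronglyMeasurable)) hAE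
    · have h0 : (∫ x in a..b, f x) = 0 := by
        rw [intervalIntegral.integral_of_le hab]
        exact MeasureTheory.integral_non_aestronglyMeasurable hAE
      rw [h0]
      have hba : (0:ℝ) ≤ b - a := sub_nonneg.mpr hab
      constructor
      · exact mul_nonpos_of_nonpos_of_nonneg hlo0 hba
      · exact mul_nonneg hhi0 hba

/-- For a continuous payoff `Φ` on compact `U × D` satisfying the Isaacs
condition with value `H`, and any partition `t = t₀ < ⋯ < t_r = 0` of `[t,0)` (`t < 0`), the
multistage alternating value
`inf_{u₁} sup_{d₁} ⋯ inf_{u_r} sup_{d_r} (1/|t|)∫_t^0 Φ([u₁,…,u_r)(τ), [d₁,…,d_r)(τ)) dτ`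
over measurable stagewise controls/disturbances equals `H`. -/
theorem stmt19 {U D : Type*}
    [TopologicalSpace U] [CompactSpace U] [Nonempty U] [MeasurableSpace U] [BorelSpace U]
    [TopologicalSpace D] [CompactSpace D] [Nonempty D] [MeasurableSpace D] [BorelSpace D]
    (Φ : U → D → ℝ) (hΦ : Continuous fun p : U × D => Φ p.1 p.2)
    (H : ℝ)
    (hIsaacs₁ : (⨅ u : U, ⨆ d : D, Φ u d) = H)
    (hIsaacs₂ : (⨆ d : D, ⨅ u : U, Φ u d) = H)
    (t : ℝ) (ht : t < 0) (r : ℕ) (hr : 0 < r)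
    (tP : Fin (r + 1) → ℝ) (htP : StrictMono tP)
    (htP0 : tP 0 = t) (htPr : tP (Fin.last r) = 0) :
    altVal (α := {f : ℝ → U // Measurable f}) (β := {f : ℝ → D // Measurable f}) r
      (fun u d => (1 / |t|) * ∑ j : Fin r,
        ∫ τ in (tP j.castSucc)..(tP j.succ), Φ ((u j).1 τ) ((d j).1 τ)) = H := by
  -- global bounds on Φ
  obtain ⟨pM, -, hpM⟩ := isCompact_univ.exists_isMaxOn univ_nonempty hΦ.continuousOn
  obtain ⟨pm, -, hpm⟩ := isCompact_univ.exists_isMinOn univ_nonempty hΦ.continuousOn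
  set lo : ℝ := Φ pm.1 pm.2 with hlo_def
  set hi : ℝ := Φ pM.1 pM.2 with hhi_def
  have hlo : ∀ u d, lo ≤ Φ u d := fun u d => hpm (mem_univ (u, d))
  have hhi : ∀ u d, Φ u d ≤ hi := fun u d => hpM (mem_univ (u, d))
  have hlohi : lo ≤ hi := hlo pM.1 pM.2
  have habs : |t| = -t := abs_of_neg ht
  have habs_pos : (0 : ℝ) < |t| := abs_pos.mpr (ne_of_lt ht)
  -- telescoping sum
  have hsum : ∑ j : Fin r, (tP j.succ - tP j.castSucc) = -t := by
    set f : ℕ → ℝ := fun i => tP ⟨min i r, Nat.lt_succ_of_le (min_le_right _ _)⟩ with hf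
    have hstep : ∀ j : Fin r, tP j.succ - tP j.castSucc = f (↑j + 1) - f ↑j := by
      intro j
      have h1 : f (↑j + 1) = tP j.succ := by
        simp only [hf]
        congr 1
        apply Fin.ext
        simp [min_eq_left (Nat.succ_le_of_lt j.isLt)]
      have h2 : f (↑j : ℕ) = tP j.castSucc := by
        simp only [hf]
        congr 1
        apply Fin.ext
        simp [min_eq_left (le_of_lt j.isLt)]
      rw [h1, h2]
    calc ∑ j : Fin r, (tP j.succ - tP j.castSucc)
        = ∑ j : Fin r, (f (↑j + 1) - f ↑j) := Finset.sum_congr rfl fun j _ => hstep j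
      _ = ∑ i ∈ Finset.range r, (f (i + 1) - f i) :=
          Fin.sum_univ_eq_sum_range (fun i => f (i + 1) - f i) r
      _ = f r - f 0 := Finset.sum_range_sub f r
      _ = -t := by
          have h1 : f r = tP (Fin.last r) := by
            simp only [hf]; congr 1; apply Fin.ext; simp [Fin.last]
          have h2 : f 0 = tP 0 := by
            simp only [hf]; congr 1
          rw [h1, h2, htPr, htP0]
          ring
  set J : (Fin r → {f : ℝ → U // Measurable f}) → (Fin r → {f : ℝ → D // Measurable f}) → ℝ :=
    fun u d => (1 / |t|) * ∑ j : Fin r,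
      ∫ τ in (tP j.castSucc)..(tP j.succ), Φ ((u j).1 τ) ((d j).1 τ) with hJ
  haveI : Nonempty {f : ℝ → U // Measurable f} :=
    ⟨⟨fun _ => Classical.arbitrary U, measurable_const⟩⟩
  haveI : Nonempty {f : ℝ → D // Measurable f} :=
    ⟨⟨fun _ => Classical.arbitrary D, measurable_const⟩⟩
  -- payoff bounds from pointwise bounds
  have hJbound : ∀ (c1 c2 : ℝ) (u : Fin r → {f : ℝ → U // Measurable f})
      (d : Fin r → {f : ℝ → D // Measurable f}),
      (∀ j τ, c1 ≤ Φ ((u j).1 τ) ((d j).1 τ) ∧ Φ ((u j).1 τ) ((d j).1 τ) ≤ c2) →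
      ((∀ j : Fin r, Measurable fun τ => Φ ((u j).1 τ) ((d j).1 τ)) ∨ (c1 ≤ 0 ∧ 0 ≤ c2)) →
      c1 ≤ J u d ∧ J u d ≤ c2 := by
    intro c1 c2 u d hptw hok
    have hab : ∀ j : Fin r, tP j.castSucc ≤ tP j.succ :=
      fun j => le_of_lt (htP j.castSucc_lt_succ)
    have hIb : ∀ j : Fin r,
        c1 * (tP j.succ - tP j.castSucc) ≤
          (∫ τ in (tP j.castSucc)..(tP j.succ), Φ ((u j).1 τ) ((d j).1 τ)) ∧
        (∫ τ in (tP j.castSucc)..(tP j.succ), Φ ((u j).1 τ) ((d j).1 τ)) ≤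
          c2 * (tP j.succ - tP j.castSucc) :=
      fun j => integral_helper (hptw j) (hab j) (hok.imp (fun hm => hm j) id)
    have hS1 : c1 * (-t) ≤ ∑ j : Fin r,
        ∫ τ in (tP j.castSucc)..(tP j.succ), Φ ((u j).1 τ) ((d j).1 τ) := by
      calc c1 * (-t) = ∑ j : Fin r, c1 * (tP j.succ - tP j.castSucc) := by
            rw [← Finset.mul_sum, hsum]
        _ ≤ _ := Finset.sum_le_sum fun j _ => (hIb j).1
    have hS2 : (∑ j : Fin r,
        ∫ τ in (tP j.castSucc)..(tP j.succ), Φ ((u j).1 τ) ((d j).1 τ)) ≤ c2 * (-t) := by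
      calc (∑ j : Fin r, ∫ τ in (tP j.castSucc)..(tP j.succ), Φ ((u j).1 τ) ((d j).1 τ))
          ≤ ∑ j : Fin r, c2 * (tP j.succ - tP j.castSucc) :=
            Finset.sum_le_sum fun j _ => (hIb j).2
        _ = c2 * (-t) := by rw [← Finset.mul_sum, hsum]
    have hpos : (0 : ℝ) ≤ 1 / |t| := by positivity
    constructor
    · have := mul_le_mul_of_nonneg_left hS1 hpos
      calc c1 = (1 / |t|) * (c1 * (-t)) := by
            rw [habs]; field_simp
            rw [mul_div_assoc, div_self (ne_of_lt ht), mul_one]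
        _ ≤ J u d := this
    · have := mul_le_mul_of_nonneg_left hS2 hpos
      calc J u d ≤ (1 / |t|) * (c2 * (-t)) := this
        _ = c2 := by
            rw [habs]; field_simp
            rw [mul_div_cancel_left₀ _ (ne_of_lt ht)]
  have hb : ∀ u d, (min lo 0) ≤ J u d ∧ J u d ≤ (max hi 0) :=
    fun u d => hJbound (min lo 0) (max hi 0) u d
      (fun j τ => ⟨le_trans (min_le_left _ _) (hlo _ _), le_trans (hhi _ _) (le_max_left _ _)⟩)
      (Or.inr ⟨min_le_right _ _, le_max_right _ _⟩)
  -- upper bound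
  have hupper : altVal r J ≤ H := by
    refine le_of_forall_pos_le_add fun ε hε => ?_
    have : (⨅ u : U, ⨆ d : D, Φ u d) < H + ε := by rw [hIsaacs₁]; linarith
    obtain ⟨ustar, hustar⟩ := exists_lt_of_ciInf_lt this
    have hU : ∀ d : D, Φ ustar d ≤ H + ε := by
      intro d
      refine le_trans (le_ciSup ⟨hi, ?_⟩ d) (le_of_lt hustar)
      rintro x ⟨d', rfl⟩
      exact hhi _ _
    have hmeasU : Continuous fun d_ : D => Φ ustar d_ :=
      hΦ.comp (continuous_const.prodMk continuous_id)
    exact altVal_le_aux (lo := min lo 0) (hi := max hi 0)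
      (⟨fun _ => ustar, measurable_const⟩ : {f : ℝ → U // Measurable f}) r J hb
      (fun bs => (hJbound lo (H + ε)
        (fun _ => (⟨fun _ => ustar, measurable_const⟩ : {f : ℝ → U // Measurable f})) bs
        (fun j τ => ⟨hlo _ _, hU _⟩)
        (Or.inl fun j => by exact hmeasU.measurable.comp (bs j).2)).2)
  -- lower bound
  have hlower : H ≤ altVal r J := by
    refine le_of_forall_pos_le_add fun ε hε => ?_
    have : H - ε < (⨆ d : D, ⨅ u : U, Φ u d) := by rw [hIsaacs₂]; linarith
    obtain ⟨dstar, hdstar⟩ := exists_lt_of_lt_ciSup this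
    have hD : ∀ u : U, H - ε ≤ Φ u dstar := by
      intro u
      refine le_trans (le_of_lt hdstar) (ciInf_le ⟨lo, ?_⟩ u)
      rintro x ⟨u', rfl⟩
      exact hlo _ _
    have hmeasD : Continuous fun u_ : U => Φ u_ dstar :=
      hΦ.comp (continuous_id.prodMk continuous_const)
    have := altVal_ge_aux (lo := min lo 0) (hi := max hi 0)
      (⟨fun _ => dstar, measurable_const⟩ : {f : ℝ → D // Measurable f}) r J hb
      (fun as => (hJbound (H - ε) hi as
        (fun _ => (⟨fun _ => dstar, measurable_const⟩ : {f : ℝ → D // Measurable f}))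
        (fun j τ => ⟨hD _, hhi _ _⟩)
        (Or.inl fun j => by exact hmeasD.measurable.comp (as j).2)).1)
    linarith
  exact le_antisymm hupper hlower
end
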